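/- Let S be an ai-semiring and q ≤ u an inequality, where u = u₁ + ⋯ + uₙ with each uᵢ and q words. Then q ≤ u holds in S^0 (the extension of S by an additive identity and multiplicative zero 0) if and only if the inequality q ≤ Σ{uᵢ : variables of uᵢ ⊆ variables of q} holds in S (in particular, the set of uᵢ whose variable set is contained in that of q must be nonempty). -/

import Mathlib

/-- Addition on `S ∪ {0}` (modelled as `Option S`, with `none` the new element 0). -/
def addZero {S : Type*} (add : S → S → S) : Option S → Option S → Option S
  | none, y => y
  | some a, none => some a
  | some a, some b => some (add a b)

/-- Multiplication on `S ∪ {0}` (modelled as `Option S`, with `none` the new element 0). -/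
def mulZero {S : Type*} (mul : S → S → S) : Option S → Option S → Option S
  | none, _ => none
  | some _, none => none
  | some a, some b => some (mul a b)

/-- Fold of a binary operation over a nonempty list, starting from its head
(the default `d` is only used for the empty list). -/
def fold1 {α : Type*} (op : α → α → α) (d : α) : List α → α
  | [] => d
  | x :: xs => xs.foldl op x

/-- Evaluation of a (nonempty) word, represented as a list of variables. -/
def evalW {α : Type*} (mul : α → α → α) (d : α) (φ : ℕ → α) (w : List ℕ) : α :=
  fold1 mul d (w.map φ)

/-- Evaluation of a term `u₁ + ⋯ + uₙ`, represented as a list of words. -/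
def evalT {α : Type*} (add mul : α → α → α) (d : α) (φ : ℕ → α) (u : List (List ℕ)) : α :=
  fold1 add d (u.map (evalW mul d φ))

namespace Stmt16Aux

lemma oadd_none_right {S : Type*} (add : S → S → S) (a : Option S) :
    addZero add a none = a := by
  cases a <;> rfl

lemma oadd_assoc {S : Type*} (add : S → S → S)
    (hAddAssoc : ∀ a b c, add (add a b) c = add a (add b c))
    (a b c : Option S) : addZero add (addZero add a b) c = addZero add a (addZero add b c) := by
  cases a <;> cases b <;> cases c <;> simp [addZero, hAddAssoc]

lemma oadd_comm {S : Type*} (add : S → S → S) (hAddComm : ∀ a b, add a b = add b a)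
    (a b : Option S) : addZero add a b = addZero add b a := by
  cases a <;> cases b <;> simp [addZero, hAddComm]

lemma foldl_oadd_some {S : Type*} (add : S → S → S) (a : S) (L : List (Option S)) :
    L.foldl (addZero add) (some a) = some (L.reduceOption.foldl add a) := by
  induction L generalizing a with
  | nil => rfl
  | cons o L ih =>
    cases o with
    | none => simpa [List.reduceOption, addZero] using ih a
    | some b => simpa [addZero] using ih (add a b)

lemma foldl_oadd_of_nil {S : Type*} (add : S → S → S) (L : List (Option S))
    (h : L.reduceOption = []) : L.foldl (addZero add) none = none := by
  induction L with
  | nil => rfl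
  | cons o L ih =>
    cases o with
    | none =>
      rw [List.reduceOption_cons_of_none] at h
      simpa [List.foldl_cons, addZero] using ih h
    | some a => simp [List.reduceOption_cons_of_some] at h

lemma foldl_oadd_of_ne {S : Type*} (d : S) (add : S → S → S) (L : List (Option S))
    (h : L.reduceOption ≠ []) :
    L.foldl (addZero add) none = some (fold1 add d L.reduceOption) := by
  induction L with
  | nil => exact absurd rfl h
  | cons o L ih =>
    cases o with
    | none =>
      rw [List.reduceOption_cons_of_none] at h ⊢
      simpa [List.foldl_cons, addZero] using ih h
    | some a =>
      rw [List.reduceOption_cons_of_some]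
      show L.foldl (addZero add) (some a) = _
      rw [foldl_oadd_some]
      rfl

lemma fold1_oadd_eq_foldl {S : Type*} (add : S → S → S) (L : List (Option S)) :
    fold1 (addZero add) none L = L.foldl (addZero add) none := by
  cases L <;> rfl

lemma foldl_oadd_shift {S : Type*} (add : S → S → S)
    (hAddAssoc : ∀ a b c, add (add a b) c = add a (add b c))
    (L : List (Option S)) (a : Option S) :
    L.foldl (addZero add) a = addZero add a (L.foldl (addZero add) none) := by
  induction L generalizing a with
  | nil => simp [oadd_none_right]
  | cons x L ih =>
    simp only [List.foldl_cons]
    have hx : addZero add none x = x := rfl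
    rw [hx, ih (addZero add a x), ih x, oadd_assoc add hAddAssoc]

lemma foldl_oadd_append {S : Type*} (add : S → S → S)
    (hAddAssoc : ∀ a b c, add (add a b) c = add a (add b c))
    (L1 L2 : List (Option S)) :
    (L1 ++ L2).foldl (addZero add) none =
      addZero add (L1.foldl (addZero add) none) (L2.foldl (addZero add) none) := by
  rw [List.foldl_append, foldl_oadd_shift add hAddAssoc]

lemma foldl_oadd_perm {S : Type*} (add : S → S → S)
    (hAddAssoc : ∀ a b c, add (add a b) c = add a (add b c))
    (hAddComm : ∀ a b, add a b = add b a)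
    {L1 L2 : List (Option S)} (p : L1.Perm L2) :
    L1.foldl (addZero add) none = L2.foldl (addZero add) none := by
  induction p with
  | nil => rfl
  | cons x _ ih =>
    simp only [List.foldl_cons]
    have hx : addZero add none x = x := rfl
    rw [hx, foldl_oadd_shift add hAddAssoc _ x, foldl_oadd_shift add hAddAssoc _ x, ih]
  | swap x y L =>
    simp only [List.foldl_cons]
    have h1 : addZero add none y = y := rfl
    have h2 : addZero add none x = x := rfl
    rw [h1, h2, foldl_oadd_shift add hAddAssoc L (addZero add y x),
      foldl_oadd_shift add hAddAssoc L (addZero add x y), oadd_comm add hAddComm x y]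
  | trans _ _ ih1 ih2 => rw [ih1, ih2]

lemma foldl_omul_none_mem {S : Type*} (mul : S → S → S) (L : List (Option S)) (acc : Option S)
    (h : none ∈ L ∨ acc = none) : L.foldl (mulZero mul) acc = none := by
  induction L generalizing acc with
  | nil => simpa using h
  | cons y L ih =>
    rcases h with h | h
    · rcases List.mem_cons.mp h with h | h
      · subst h
        apply ih
        right
        cases acc <;> rfl
      · exact ih _ (Or.inl h)
    · subst h
      exact ih _ (Or.inr rfl)

lemma evalW_some {S : Type*} (d : S) (mul : S → S → S)
    (ψ : ℕ → Option S) (φ : ℕ → S) (w : List ℕ) (hwne : w ≠ [])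
    (h : ∀ x ∈ w, ψ x = some (φ x)) :
    evalW (mulZero mul) none ψ w = some (evalW mul d φ w) := by
  cases w with
  | nil => exact absurd rfl hwne
  | cons x xs =>
    show (xs.map ψ).foldl (mulZero mul) (ψ x) = some ((xs.map φ).foldl mul (φ x))
    rw [h x (List.mem_cons_self)]
    have key : ∀ (l : List ℕ) (a : S), (∀ y ∈ l, ψ y = some (φ y)) →
        (l.map ψ).foldl (mulZero mul) (some a) = some ((l.map φ).foldl mul a) := by
      intro l
      induction l with
      | nil => intro a _; rfl
      | cons y l ih =>
        intro a hl
        simp only [List.map_cons, List.foldl_cons, hl y (List.mem_cons_self)]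
        exact ih (mul a (φ y)) (fun z hz => hl z (List.mem_cons_of_mem y hz))
    exact key xs (φ x) (fun z hz => h z (List.mem_cons_of_mem x hz))

lemma evalW_none {S : Type*} (mul : S → S → S) (ψ : ℕ → Option S) (w : List ℕ)
    (x : ℕ) (hx : x ∈ w) (hψ : ψ x = none) :
    evalW (mulZero mul) none ψ w = none := by
  cases w with
  | nil => simp at hx
  | cons y ys =>
    show (ys.map ψ).foldl (mulZero mul) (ψ y) = none
    rcases List.mem_cons.mp hx with h | h
    · subst h
      exact foldl_omul_none_mem mul _ _ (Or.inr hψ)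
    · exact foldl_omul_none_mem mul _ _ (Or.inl (by
        rw [← hψ]; exact List.mem_map_of_mem (f := ψ) h))

lemma reduce_key {S : Type*} (d : S) (mul : S → S → S)
    (ψ : ℕ → Option S) (u : List (List ℕ)) (hw : ∀ w ∈ u, w ≠ []) :
    (u.map (evalW (mulZero mul) none ψ)).reduceOption
      = (u.filter (fun w => w.all (fun x => (ψ x).isSome))).map
          (evalW mul d (fun x => (ψ x).getD d)) := by
  induction u with
  | nil => rfl
  | cons w u ih =>
    have ih' := ih (fun v hv => hw v (List.mem_cons_of_mem w hv))
    by_cases hP : w.all (fun x => (ψ x).isSome) = true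
    · have hall : ∀ x ∈ w, ψ x = some ((ψ x).getD d) := by
        intro x hx
        have := List.all_eq_true.mp hP x hx
        rcases Option.isSome_iff_exists.mp (by simpa using this) with ⟨a, ha⟩
        simp [ha]
      rw [List.map_cons,
        evalW_some d mul ψ _ w (hw w (List.mem_cons_self)) hall,
        List.reduceOption_cons_of_some]
      rw [List.filter_cons, if_pos hP, List.map_cons, ih']
    · have hex : ∃ x ∈ w, ψ x = none := by
        simp only [List.all_eq_true, not_forall] at hP
        rcases hP with ⟨x, hx, hns⟩
        exact ⟨x, hx, by simpa [Option.not_isSome_iff_eq_none] using hns⟩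
      rcases hex with ⟨x, hx, hψ⟩
      rw [List.map_cons, evalW_none mul ψ w x hx hψ, List.reduceOption_cons_of_none]
      rw [List.filter_cons, if_neg hP, ih']

lemma evalT_option_nil {S : Type*} (d : S) (add mul : S → S → S)
    (ψ : ℕ → Option S) (u : List (List ℕ)) (hw : ∀ w ∈ u, w ≠ [])
    (h : u.filter (fun w => w.all (fun x => (ψ x).isSome)) = []) :
    evalT (addZero add) (mulZero mul) none ψ u = none := by
  show fold1 (addZero add) none _ = _
  rw [fold1_oadd_eq_foldl]
  apply foldl_oadd_of_nil
  rw [reduce_key d mul ψ u hw, h, List.map_nil]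

lemma evalT_option_ne {S : Type*} (d : S) (add mul : S → S → S)
    (ψ : ℕ → Option S) (u : List (List ℕ)) (hw : ∀ w ∈ u, w ≠ [])
    (h : u.filter (fun w => w.all (fun x => (ψ x).isSome)) ≠ []) :
    evalT (addZero add) (mulZero mul) none ψ u =
      some (evalT add mul d (fun x => (ψ x).getD d)
        (u.filter (fun w => w.all (fun x => (ψ x).isSome)))) := by
  show fold1 (addZero add) none _ = _
  rw [fold1_oadd_eq_foldl, foldl_oadd_of_ne d add _ (by
    rw [reduce_key d mul ψ u hw]
    intro hnil
    exact h (List.map_eq_nil_iff.mp hnil))]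
  rw [reduce_key d mul ψ u hw]
  rfl

lemma reduceOption_map_some {S : Type*} (l : List S) :
    (l.map some).reduceOption = l := by
  induction l with
  | nil => rfl
  | cons x l ih => simp [List.reduceOption_cons_of_some, ih]

/-- sum of a nonempty list of `some`s -/
lemma foldl_oadd_map_some {S : Type*} (d : S) (add : S → S → S) (l : List S) (hl : l ≠ []) :
    (l.map some).foldl (addZero add) none = some (fold1 add d l) := by
  rw [foldl_oadd_of_ne d add _ (by simp [reduceOption_map_some, hl])]
  simp [reduceOption_map_some]

end Stmt16Aux

open Stmt16Aux

/-- Let `S` be an ai-semiring and `q ≤ u₁ + ⋯ + uₙ` an inequality between words.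
Then `q ≤ u` holds in `S^0` iff the list `D_q(u)` of those `uᵢ` whose variables are
contained in the variables of `q` is nonempty and `q ≤ D_q(u)` holds in `S`. -/
theorem stmt16 {S : Type*} (d : S) (add mul : S → S → S)
    (hAddAssoc : ∀ a b c, add (add a b) c = add a (add b c))
    (hAddComm : ∀ a b, add a b = add b a)
    (hAddIdem : ∀ a, add a a = a)
    (hMulAssoc : ∀ a b c, mul (mul a b) c = mul a (mul b c))
    (hDistribL : ∀ a b c, mul a (add b c) = add (mul a b) (mul a c))
    (hDistribR : ∀ a b c, mul (add a b) c = add (mul a c) (mul b c))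
    (q : List ℕ) (u : List (List ℕ))
    (hq : q ≠ []) (hu : u ≠ []) (hw : ∀ w ∈ u, w ≠ []) :
    ((∀ ψ : ℕ → Option S,
        addZero add (evalW (mulZero mul) none ψ q)
            (evalT (addZero add) (mulZero mul) none ψ u)
          = evalT (addZero add) (mulZero mul) none ψ u)
      ↔ (u.filter (fun w => w.all (fun x => decide (x ∈ q))) ≠ [] ∧
         ∀ φ : ℕ → S,
           add (evalW mul d φ q)
               (evalT add mul d φ (u.filter (fun w => w.all (fun x => decide (x ∈ q)))))
             = evalT add mul d φ (u.filter (fun w => w.all (fun x => decide (x ∈ q)))))) := by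
  set P : List ℕ → Bool := fun w => w.all (fun x => decide (x ∈ q)) with hP
  constructor
  · intro h
    -- nonemptiness of the filtered list
    have hne : u.filter P ≠ [] := by
      intro hFnil
      set ψ : ℕ → Option S := fun x => if x ∈ q then some d else none with hψ
      have hfeq : u.filter (fun w => w.all (fun x => (ψ x).isSome)) = u.filter P := by
        apply List.filter_congr
        intro w _
        simp only [hψ, hP]
        congr 1
        funext x
        by_cases hx : x ∈ q <;> simp [hx]
      have hT := evalT_option_nil d add mul ψ u hw (by rw [hfeq, hFnil])
      have hq' : evalW (mulZero mul) none ψ q = some (evalW mul d (fun _ => d) q) := by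
        apply evalW_some d mul ψ _ q hq
        intro x hx
        simp [hψ, hx]
      have hh := h ψ
      rw [hT, hq', oadd_none_right] at hh
      exact Option.some_ne_none _ hh
    refine ⟨hne, ?_⟩
    intro φ
    set ψ : ℕ → Option S := fun x => if x ∈ q then some (φ x) else none with hψ
    have hfeq : u.filter (fun w => w.all (fun x => (ψ x).isSome)) = u.filter P := by
      apply List.filter_congr
      intro w _
      simp only [hψ, hP]
      congr 1
      funext x
      by_cases hx : x ∈ q <;> simp [hx]
    have hT := evalT_option_ne d add mul ψ u hw (by rw [hfeq]; exact hne)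
    rw [hfeq] at hT
    -- the evaluation functions agree on the relevant words
    have hevalT : evalT add mul d (fun x => (ψ x).getD d) (u.filter P)
        = evalT add mul d φ (u.filter P) := by
      show fold1 add d _ = fold1 add d _
      congr 1
      apply List.map_congr_left
      intro w hwmem
      have hwP : P w = true := by
        have := (List.mem_filter.mp hwmem).2
        exact this
      show fold1 mul d _ = fold1 mul d _
      congr 1
      apply List.map_congr_left
      intro x hx
      have hxq : x ∈ q := by
        have := List.all_eq_true.mp hwP x hx
        simpa using this
      simp [hψ, hxq]
    rw [hevalT] at hT
    have hq' : evalW (mulZero mul) none ψ q = some (evalW mul d φ q) := by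
      apply evalW_some d mul ψ φ q hq
      intro x hx
      simp [hψ, hx]
    have hh := h ψ
    rw [hT, hq'] at hh
    exact Option.some_injective _ hh
  · rintro ⟨hne, hineq⟩ ψ
    by_cases hqsome : ∀ x ∈ q, (ψ x).isSome
    · set φ : ℕ → S := fun x => (ψ x).getD d with hφ
      set P' : List ℕ → Bool := fun w => w.all (fun x => (ψ x).isSome) with hP'
      have hq' : evalW (mulZero mul) none ψ q = some (evalW mul d φ q) := by
        apply evalW_some d mul ψ φ q hq
        intro x hx
        rcases Option.isSome_iff_exists.mp (hqsome x hx) with ⟨a, ha⟩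
        simp [hφ, ha]
      set A := u.filter P' with hA
      have hPP' : ∀ w, P w = true → P' w = true := by
        intro w hPw
        simp only [hP', List.all_eq_true]
        intro x hx
        apply hqsome
        have := List.all_eq_true.mp hPw x hx
        simpa using this
      have hFA : u.filter P = A.filter P := by
        rw [hA, List.filter_filter]
        apply List.filter_congr
        intro w _
        by_cases hPw : P w = true
        · simp [hPw, hPP' w hPw]
        · simp [Bool.eq_false_iff.mpr hPw]
      have hAne : A ≠ [] := by
        intro hAnil
        rw [hFA, hAnil] at hne
        exact hne rfl
      have hT := evalT_option_ne d add mul ψ u hw (by rw [← hP', ← hA]; exact hAne)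
      rw [← hP', ← hA, ← hφ] at hT
      rw [hq', hT]
      -- decompose the sum over A
      have hperm : (A.filter P ++ A.filter (fun w => !P w)).Perm A :=
        List.filter_append_perm P A
      have hpermmap : (((A.filter P).map (evalW mul d φ)).map some ++
          ((A.filter (fun w => !P w)).map (evalW mul d φ)).map some).Perm
            ((A.map (evalW mul d φ)).map some) := by
        rw [← List.map_append, ← List.map_append]
        exact (hperm.map _).map _
      have hsum : ((A.map (evalW mul d φ)).map some).foldl (addZero add) none
          = addZero add (some (evalT add mul d φ (u.filter P)))
              ((((A.filter (fun w => !P w)).map (evalW mul d φ)).map some).foldl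
                (addZero add) none) := by
        rw [← foldl_oadd_perm add hAddAssoc hAddComm hpermmap,
          foldl_oadd_append add hAddAssoc]
        congr 1
        rw [foldl_oadd_map_some d add _ (by
          rw [← hFA]
          intro hmapnil
          exact hne (List.map_eq_nil_iff.mp hmapnil))]
        rw [← hFA]
        rfl
      have hsome : some (evalT add mul d φ A)
          = ((A.map (evalW mul d φ)).map some).foldl (addZero add) none := by
        rw [foldl_oadd_map_some d add _ (by
          intro hmapnil
          exact hAne (List.map_eq_nil_iff.mp hmapnil))]
        rfl
      rw [hsome, hsum, ← oadd_assoc add hAddAssoc]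
      congr 1
      exact congrArg some (hineq φ)
    · push_neg at hqsome
      rcases hqsome with ⟨x, hx, hns⟩
      have hψx : ψ x = none := by
        simpa [Option.not_isSome_iff_eq_none] using hns
      rw [evalW_none mul ψ q x hx hψx]
      rfl
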